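/- Let M be a real symmetric n×n matrix (n ≥ 1) all of whose eigenvalues lie in [-1, 1], let k ≥ 0, and let z_1, …, z_R be independent random vectors in ℝⁿ, each with independent Rademacher coordinates (uniform on {−1, +1}). Define the Hutchinson moment estimator μ̂_k = (1/(nR)) Σ_{r=1}^{R} z_rᵀ T_k(M) z_r. Then μ̂_k is unbiased, E[μ̂_k] = (1/n)·tr(T_k(M)), and its variance satisfies Var(μ̂_k) ≤ 2/(nR); in particular its standard deviation is at most sqrt(2/(nR)). -/

import Mathlib

open MeasureTheory Matrix ProbabilityTheory Polynomial
open scoped ENNReal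

noncomputable def rademacher : Measure ℝ :=
  (2 : ℝ≥0∞)⁻¹ • Measure.dirac (-1) + (2 : ℝ≥0∞)⁻¹ • Measure.dirac 1

noncomputable def rademacherProbes (n R : ℕ) : Measure (Fin R → Fin n → ℝ) :=
  Measure.pi fun _ => Measure.pi fun _ => rademacher

/-- Hutchinson's moment estimator `μ̂_k = (1/(nR)) Σ_r z_rᵀ T_k(M) z_r`. -/
noncomputable def hutchinsonEstimator (n R : ℕ) (M : Matrix (Fin n) (Fin n) ℝ)
    (k : ℕ) (z : Fin R → Fin n → ℝ) : ℝ :=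
  ((n : ℝ) * R)⁻¹ * ∑ r, ∑ i, ∑ j,
    z r i * (Polynomial.aeval M (Polynomial.Chebyshev.T ℝ k)) i j * z r j

instance : IsProbabilityMeasure rademacher := by
  constructor
  simp [rademacher, ENNReal.inv_two_add_inv_two]

instance (n R : ℕ) : IsProbabilityMeasure (rademacherProbes n R) := by
  unfold rademacherProbes; infer_instance

/-- Integral against rademacher. -/
lemma rademacher_integral (f : ℝ → ℝ) (hf : Measurable f) :
    ∫ x, f x ∂rademacher = (f (-1) + f 1) / 2 := by
  rw [rademacher, integral_add_measure, integral_smul_measure, integral_smul_measure,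
    integral_dirac' _ _ hf.stronglyMeasurable, integral_dirac' _ _ hf.stronglyMeasurable]
  · simp; ring
  · exact ((integrable_const (f (-1))).congr (ae_eq_dirac' hf).symm).smul_measure (by simp)
  · exact ((integrable_const (f 1)).congr (ae_eq_dirac' hf).symm).smul_measure (by simp)

lemma rademacher_moment (m : ℕ) :
    ∫ x, x ^ m ∂rademacher = if Even m then 1 else 0 := by
  rw [show (fun x : ℝ => x ^ m) = fun x => (fun y : ℝ => y ^ m) x from rfl,
    rademacher_integral (fun y : ℝ => y ^ m) (by fun_prop)]
  rcases Nat.even_or_odd m with h | h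
  · rw [if_pos h, h.neg_one_pow]; norm_num
  · rw [if_neg (Nat.not_even_iff_odd.2 h), h.neg_one_pow]; norm_num

/-- Fubini for Measure.pi over Fin, real valued. -/
theorem integral_pi_prod {N : ℕ} {E : Fin N → Type*} [∀ i, MeasurableSpace (E i)]
    (μ : ∀ i, Measure (E i)) [∀ i, SigmaFinite (μ i)] (f : (i : Fin N) → E i → ℝ) :
    ∫ x, ∏ i, f i (x i) ∂Measure.pi μ = ∏ i, ∫ x, f i x ∂μ i := by
  induction N with
  | zero => simp [measureReal_def]
  | succ N ih =>
      calc
        _ = ∫ x : E 0 × ((i : Fin N) → E (Fin.succ i)),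
            f 0 x.1 * ∏ i : Fin N, f (Fin.succ i) (x.2 i)
              ∂((μ 0).prod (Measure.pi fun i => μ (Fin.succ i))) := by
          rw [integral_fin_nat_prod_eq_prod, integral_prod_mul (μ := μ 0) (ν := Measure.pi fun i => μ (Fin.succ i))
            (fun x => f 0 x) (fun y : (i : Fin N) → E (Fin.succ i) => ∏ i : Fin N, f (Fin.succ i) (y i)), integral_fin_nat_prod_eq_prod,
            Fin.prod_univ_succ]
        _ = (∫ x, f 0 x ∂μ 0) * ∏ i : Fin N, ∫ x, f (Fin.succ i) x ∂μ (Fin.succ i) := by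
          rw [← ih, ← integral_prod_mul]
        _ = _ := by rw [Fin.prod_univ_succ]

section Moments
variable {n R : ℕ}

/-- The basic monomial function. -/
noncomputable def Mono (n R : ℕ) (e : Fin R → Fin n → ℕ) (z : Fin R → Fin n → ℝ) : ℝ :=
  ∏ t, ∏ m, (z t m) ^ (e t m)

lemma Mono_integral (e : Fin R → Fin n → ℕ) :
    ∫ z, Mono n R e z ∂rademacherProbes n R
      = if (∀ t m, Even (e t m)) then 1 else 0 := by
  unfold Mono rademacherProbes
  rw [integral_pi_prod (fun _ => Measure.pi fun _ => rademacher)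
    (fun t w => ∏ m, (w m) ^ (e t m))]
  have h1 : ∀ t, (∫ w, ∏ m, (w m) ^ (e t m) ∂(Measure.pi fun _ => rademacher))
      = ∏ m, (if Even (e t m) then (1:ℝ) else 0) := by
    intro t
    rw [integral_pi_prod (fun _ => rademacher) (fun m x => x ^ (e t m))]
    exact Finset.prod_congr rfl fun m _ => rademacher_moment (e t m)
  simp_rw [h1, Finset.prod_boole]
  by_cases h : ∀ t m, Even (e t m)
  · rw [if_pos h]
    exact Finset.prod_eq_one fun x _ => if_pos fun i _ => h x i
  · rw [if_neg h]
    push_neg at h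
    obtain ⟨t, m, hm⟩ := h
    exact Finset.prod_eq_zero (Finset.mem_univ t) (if_neg fun hall => hm (hall m (Finset.mem_univ m)))

lemma mono_measurable (e : Fin R → Fin n → ℕ) : Measurable (Mono n R e) := by
  unfold Mono; fun_prop

/-- a.e. all coordinates are ±1. -/
lemma ae_pm_one :
    ∀ᵐ z ∂rademacherProbes n R, ∀ t m, z t m = 1 ∨ z t m = -1 := by
  have h0 : ∀ᵐ x ∂rademacher, x = 1 ∨ x = -1 := by
    rw [ae_iff]
    have : {x : ℝ | ¬(x = 1 ∨ x = -1)} = ({1, -1} : Set ℝ)ᶜ := by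
      ext x; simp [not_or]
    rw [this, rademacher]
    have hm : MeasurableSet (({1, -1} : Set ℝ)ᶜ) :=
      (((Set.finite_singleton (-1:ℝ)).insert 1).measurableSet).compl
    simp [Measure.dirac_apply' _ hm]
  have h1 : ∀ᵐ w ∂(Measure.pi fun _ : Fin n => rademacher), ∀ m, w m = 1 ∨ w m = -1 :=
    (Filter.eventually_pi fun m => h0).filter_mono Measure.ae_pi_le_pi
  exact (Filter.eventually_pi fun t => h1).filter_mono Measure.ae_pi_le_pi

lemma mono_ae_bound (e : Fin R → Fin n → ℕ) :
    ∀ᵐ z ∂rademacherProbes n R, |Mono n R e z| ≤ 1 := by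
  refine ae_pm_one.mono fun z hz => ?_
  unfold Mono
  rw [Finset.abs_prod]
  refine Finset.prod_le_one (fun _ _ => abs_nonneg _) fun t _ => ?_
  rw [Finset.abs_prod]
  refine Finset.prod_le_one (fun _ _ => abs_nonneg _) fun m _ => ?_
  rcases hz t m with h | h <;> simp [h, abs_pow]

lemma mono_integrable (e : Fin R → Fin n → ℕ) :
    Integrable (Mono n R e) (rademacherProbes n R) := by
  exact memLp_one_iff_integrable.1 <| MemLp.of_bound
    (mono_measurable e).aestronglyMeasurable 1
    ((mono_ae_bound e).mono fun z hz => by simpa using hz)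

end Moments

section Indicators

/-- point indicator -/
def indP {α : Type*} [DecidableEq α] (p x : α) : ℕ := if x = p then 1 else 0

lemma evenTwoInd {α : Type*} [DecidableEq α] (a b : α) :
    (∀ x, Even (indP a x + indP b x)) ↔ a = b := by
  constructor
  · intro h
    by_contra hab
    have ha := h a
    simp only [indP, if_pos rfl, if_neg hab] at ha
    exact (by decide : ¬ Even (1 + 0)) ha
  · rintro rfl x
    simp only [indP]
    split_ifs <;> decide

lemma evenFourInd {α : Type*} [DecidableEq α] (a b c d : α) :
    (∀ x, Even (indP a x + indP b x + indP c x + indP d x)) ↔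
      (a = b ∧ c = d) ∨ (a = c ∧ b = d) ∨ (a = d ∧ b = c) := by
  constructor
  · intro h
    by_cases hab : a = b
    · subst hab
      refine Or.inl ⟨rfl, (evenTwoInd c d).1 fun x => ?_⟩
      have hx := h x
      rw [Nat.even_iff] at hx ⊢
      omega
    · have ha := h a
      simp only [indP, if_pos rfl, if_neg hab] at ha
      by_cases hac : a = c
      · subst hac
        by_cases had : a = d
        · exfalso; rw [if_pos rfl, if_pos had] at ha; exact (by decide : ¬ Even (1+0+1+1)) ha
        · refine Or.inr (Or.inl ⟨rfl, (evenTwoInd b d).1 fun x => ?_⟩)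
          have hx := h x
          rw [Nat.even_iff] at hx ⊢
          omega
      · by_cases had : a = d
        · subst had
          refine Or.inr (Or.inr ⟨rfl, (evenTwoInd b c).1 fun x => ?_⟩)
          have hx := h x
          rw [Nat.even_iff] at hx ⊢
          omega
        · exfalso
          rw [if_neg hac, if_neg had] at ha
          exact (by decide : ¬ Even (1+0+0+0)) ha
  · rintro (⟨rfl, rfl⟩ | ⟨rfl, rfl⟩ | ⟨rfl, rfl⟩) x <;> simp only [indP] <;>
      split_ifs <;> simp_all <;> decide

end Indicators

section MonoLemmas
variable {n R : ℕ}

lemma mono_pair_form (e : Fin R → Fin n → ℕ) (z : Fin R → Fin n → ℝ) :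
    Mono n R e z = ∏ x : Fin R × Fin n, (z x.1 x.2) ^ (e x.1 x.2) :=
  (Fintype.prod_prod_type' _).symm

lemma mono_add (e₁ e₂ : Fin R → Fin n → ℕ) (z : Fin R → Fin n → ℝ) :
    Mono n R (fun t m => e₁ t m + e₂ t m) z = Mono n R e₁ z * Mono n R e₂ z := by
  simp [mono_pair_form, pow_add, Finset.prod_mul_distrib]

lemma mono_single (p : Fin R × Fin n) (z : Fin R → Fin n → ℝ) :
    Mono n R (fun t m => indP p (t, m)) z = z p.1 p.2 := by
  rw [mono_pair_form]
  have : ∀ x : Fin R × Fin n, (z x.1 x.2) ^ (indP p x) = if x = p then z x.1 x.2 else 1 := by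
    intro x; simp only [indP]; split_ifs <;> simp
  simp_rw [this]
  rw [Finset.prod_ite_eq' Finset.univ p (fun x => z x.1 x.2), if_pos (Finset.mem_univ p)]

lemma pairIntegral (r : Fin R) (i j : Fin n) :
    ∫ z, z r i * z r j ∂rademacherProbes n R = if i = j then 1 else 0 := by
  have hfe : (fun z : Fin R → Fin n → ℝ => z r i * z r j)
      = Mono n R (fun t m => indP (r, i) (t, m) + indP (r, j) (t, m)) := by
    funext z
    rw [mono_add, mono_single, mono_single]
  rw [hfe, Mono_integral]
  refine if_congr ?_ rfl rfl
  rw [show (∀ t m, Even (indP (r,i) (t,m) + indP (r,j) (t,m)))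
      ↔ ∀ x : Fin R × Fin n, Even (indP ((r,i) : Fin R × Fin n) x + indP (r,j) x) from
    ⟨fun h x => h x.1 x.2, fun h t m => h (t, m)⟩, evenTwoInd]
  simp [Prod.ext_iff]

lemma quadIntegral (r s : Fin R) (i j p q : Fin n) :
    ∫ z, (z r i * z r j) * (z s p * z s q) ∂rademacherProbes n R =
      if (i = j ∧ p = q) ∨ (r = s ∧ i = p ∧ j = q) ∨ (r = s ∧ i = q ∧ j = p)
        then 1 else 0 := by
  have hfe : (fun z : Fin R → Fin n → ℝ => (z r i * z r j) * (z s p * z s q))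
      = Mono n R (fun t m => (indP (r, i) (t, m) + indP (r, j) (t, m))
          + (indP (s, p) (t, m) + indP (s, q) (t, m))) := by
    funext z
    rw [mono_add, mono_add, mono_add, mono_single, mono_single, mono_single, mono_single]
  rw [hfe, Mono_integral]
  refine if_congr ?_ rfl rfl
  have h1 : (∀ t m, Even ((indP ((r,i) : Fin R × Fin n) (t,m) + indP (r,j) (t,m))
        + (indP (s,p) (t,m) + indP (s,q) (t,m))))
      ↔ ∀ x : Fin R × Fin n,
          Even (indP ((r,i) : Fin R × Fin n) x + indP (r,j) x + indP (s,p) x + indP (s,q) x) := by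
    constructor
    · intro h x
      obtain ⟨t, m⟩ := x
      have := h t m
      rw [Nat.even_iff] at this ⊢; omega
    · intro h t m
      have := h (t, m)
      rw [Nat.even_iff] at this ⊢; omega
  rw [h1, evenFourInd]
  simp only [Prod.ext_iff]
  tauto

end MonoLemmas

section MatrixPart
variable {n : ℕ}

/-- Conjugation by a unitary matrix as an algebra hom. -/
noncomputable def conjAlgHom (U : Matrix (Fin n) (Fin n) ℝ)
    (h1 : U * star U = 1) (h2 : star U * U = 1) :
    Matrix (Fin n) (Fin n) ℝ →ₐ[ℝ] Matrix (Fin n) (Fin n) ℝ where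
  toFun A := U * A * star U
  map_one' := by show U * 1 * star U = 1; rw [Matrix.mul_one, h1]
  map_mul' A B := by
    simp only [Matrix.mul_assoc]
    rw [← Matrix.mul_assoc (star U) U, h2, Matrix.one_mul]
  map_zero' := by simp
  map_add' A B := by noncomm_ring
  commutes' r := by
    simp only [Algebra.algebraMap_eq_smul_one]
    rw [Matrix.mul_smul, mul_one, Matrix.smul_mul, h1]

lemma aeval_hermitian_spectral (M : Matrix (Fin n) (Fin n) ℝ) (hM : M.IsHermitian)
    (p : Polynomial ℝ) :
    Polynomial.aeval M p =
      (hM.eigenvectorUnitary : Matrix (Fin n) (Fin n) ℝ)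
        * Matrix.diagonal (fun i => p.eval (hM.eigenvalues i))
        * star (hM.eigenvectorUnitary : Matrix (Fin n) (Fin n) ℝ) := by
  set U : Matrix (Fin n) (Fin n) ℝ := (hM.eigenvectorUnitary : Matrix (Fin n) (Fin n) ℝ)
  have h1 : U * star U = 1 := Matrix.mem_unitaryGroup_iff.mp hM.eigenvectorUnitary.2
  have h2 : star U * U = 1 := Matrix.mem_unitaryGroup_iff'.mp hM.eigenvectorUnitary.2
  have hMspec : M = U * Matrix.diagonal hM.eigenvalues * star U := by
    have := hM.spectral_theorem
    simpa using this
  have key : Polynomial.aeval ((conjAlgHom U h1 h2) (Matrix.diagonal hM.eigenvalues)) p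
      = (conjAlgHom U h1 h2) (Polynomial.aeval (Matrix.diagonal hM.eigenvalues) p) :=
    Polynomial.aeval_algHom_apply _ _ _
  have hdiag : Polynomial.aeval (Matrix.diagonal hM.eigenvalues) p
      = Matrix.diagonal (fun i => p.eval (hM.eigenvalues i)) := by
    have h := Polynomial.aeval_algHom_apply
      (Matrix.diagonalAlgHom (R := ℝ) (n := Fin n) (α := ℝ)) hM.eigenvalues p
    simp only [Matrix.diagonalAlgHom_apply] at h
    have hfun : (Polynomial.aeval hM.eigenvalues) p
        = fun i => Polynomial.eval (hM.eigenvalues i) p := by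
      funext i
      rw [Polynomial.aeval_fn_apply, Polynomial.aeval_def, Algebra.algebraMap_self]
      rfl
    rw [h, hfun]
  have hMc : (conjAlgHom U h1 h2) (Matrix.diagonal hM.eigenvalues) = M :=
    (show (conjAlgHom U h1 h2) (Matrix.diagonal hM.eigenvalues)
      = U * Matrix.diagonal hM.eigenvalues * star U from rfl).trans hMspec.symm
  calc Polynomial.aeval M p
      = Polynomial.aeval ((conjAlgHom U h1 h2) (Matrix.diagonal hM.eigenvalues)) p :=
        congrArg (fun A => Polynomial.aeval A p) hMc.symm
    _ = (conjAlgHom U h1 h2) (Polynomial.aeval (Matrix.diagonal hM.eigenvalues) p) := key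
    _ = (conjAlgHom U h1 h2) (Matrix.diagonal (fun i => p.eval (hM.eigenvalues i))) := by
        rw [hdiag]
    _ = U * Matrix.diagonal (fun i => p.eval (hM.eigenvalues i)) * star U := rfl

end MatrixPart

section Frobenius
variable {n : ℕ}

lemma aeval_transpose_eq (M : Matrix (Fin n) (Fin n) ℝ) (hM : M.IsHermitian)
    (p : Polynomial ℝ) :
    (Polynomial.aeval M p : Matrix (Fin n) (Fin n) ℝ)ᵀ = Polynomial.aeval M p := by
  set U : Matrix (Fin n) (Fin n) ℝ := (hM.eigenvectorUnitary : Matrix (Fin n) (Fin n) ℝ)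
  have hs : star U = Uᵀ := by
    rw [Matrix.star_eq_conjTranspose, Matrix.conjTranspose_eq_transpose_of_trivial]
  rw [aeval_hermitian_spectral M hM p, hs, Matrix.transpose_mul, Matrix.transpose_mul,
    Matrix.transpose_transpose, Matrix.diagonal_transpose, Matrix.mul_assoc]

lemma sum_sq_aeval (M : Matrix (Fin n) (Fin n) ℝ) (hM : M.IsHermitian)
    (p : Polynomial ℝ) :
    ∑ i, ∑ j, ((Polynomial.aeval M p : Matrix (Fin n) (Fin n) ℝ) i j)^2
      = ∑ i, (p.eval (hM.eigenvalues i))^2 := by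
  set U : Matrix (Fin n) (Fin n) ℝ := (hM.eigenvectorUnitary : Matrix (Fin n) (Fin n) ℝ)
  have h2 : star U * U = 1 := Matrix.mem_unitaryGroup_iff'.mp hM.eigenvectorUnitary.2
  set B : Matrix (Fin n) (Fin n) ℝ := Polynomial.aeval M p with hB
  have hsym : ∀ i j, B j i = B i j := by
    intro i j
    have := aeval_transpose_eq M hM p
    calc B j i = Bᵀ i j := rfl
    _ = B i j := by rw [hB, this]
  have htr : (B * B).trace = ∑ i, (p.eval (hM.eigenvalues i))^2 := by
    have hBspec := aeval_hermitian_spectral M hM p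
    have : B * B = U * Matrix.diagonal (fun i => (p.eval (hM.eigenvalues i))^2) * star U := by
      rw [hB, hBspec]
      rw [show ∀ (X Y : Matrix (Fin n) (Fin n) ℝ), (U * X * star U) * (U * Y * star U)
          = U * (X * (star U * U) * Y) * star U from fun X Y => by
        simp only [Matrix.mul_assoc]]
      rw [h2, Matrix.mul_one, Matrix.diagonal_mul_diagonal]
      have : (fun i => Polynomial.eval (hM.eigenvalues i) p * Polynomial.eval (hM.eigenvalues i) p)
          = fun i => (Polynomial.eval (hM.eigenvalues i) p)^2 := by
        funext i; rw [sq]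
      rw [this]
    rw [this, Matrix.trace_mul_cycle, h2, Matrix.one_mul, Matrix.trace_diagonal]
  rw [← htr, Matrix.trace]
  refine Finset.sum_congr rfl fun i _ => ?_
  rw [Matrix.diag, Matrix.mul_apply]
  refine Finset.sum_congr rfl fun j _ => ?_
  rw [hsym i j, sq]

end Frobenius

section MoreInt
variable {n R : ℕ}

lemma pair_integrable (r : Fin R) (i j : Fin n) :
    Integrable (fun z : Fin R → Fin n → ℝ => z r i * z r j) (rademacherProbes n R) := by
  have hfe : (fun z : Fin R → Fin n → ℝ => z r i * z r j)
      = Mono n R (fun t m => indP (r, i) (t, m) + indP (r, j) (t, m)) := by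
    funext z
    rw [mono_add, mono_single, mono_single]
  rw [hfe]
  exact mono_integrable _

lemma quad_integrable (r s : Fin R) (i j p q : Fin n) :
    Integrable (fun z : Fin R → Fin n → ℝ => (z r i * z r j) * (z s p * z s q))
      (rademacherProbes n R) := by
  have hfe : (fun z : Fin R → Fin n → ℝ => (z r i * z r j) * (z s p * z s q))
      = Mono n R (fun t m => (indP (r, i) (t, m) + indP (r, j) (t, m))
          + (indP (s, p) (t, m) + indP (s, q) (t, m))) := by
    funext z
    rw [mono_add, mono_add, mono_add, mono_single, mono_single, mono_single, mono_single]
  rw [hfe]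
  exact mono_integrable _

end MoreInt

section BigSum
variable {n R : ℕ}

lemma indicator_split (r s : Fin R) (i j p q : Fin n) :
    (if (i = j ∧ p = q) ∨ (r = s ∧ i = p ∧ j = q) ∨ (r = s ∧ i = q ∧ j = p)
        then (1:ℝ) else 0)
      = (if i = j then (1:ℝ) else 0) * (if p = q then (1:ℝ) else 0)
        + (if r = s then (1:ℝ) else 0) *
            ((if i = p then (1:ℝ) else 0) * (if j = q then (1:ℝ) else 0))
        + (if r = s then (1:ℝ) else 0) *
            ((if i = q then (1:ℝ) else 0) * (if j = p then (1:ℝ) else 0))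
        - 2 * ((if r = s then (1:ℝ) else 0) * ((if i = j then (1:ℝ) else 0) *
            ((if j = p then (1:ℝ) else 0) * (if p = q then (1:ℝ) else 0)))) := by
  by_cases h1 : i = j <;> by_cases h2 : p = q <;> by_cases h3 : r = s <;>
    by_cases h4 : i = p <;> by_cases h5 : j = q <;> by_cases h6 : i = q <;>
    by_cases h7 : j = p <;> subst_vars <;> simp_all <;> norm_num

lemma bigsum_eval (B : Matrix (Fin n) (Fin n) ℝ) :
    (∑ r : Fin R, ∑ i, ∑ j, ∑ s : Fin R, ∑ p, ∑ q, (B i j * B p q) *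
        (if (i = j ∧ p = q) ∨ (r = s ∧ i = p ∧ j = q) ∨ (r = s ∧ i = q ∧ j = p)
          then (1:ℝ) else 0))
      = (R:ℝ)^2 * (∑ i, B i i)^2 + (R:ℝ) * (∑ i, ∑ j, B i j * B i j)
        + (R:ℝ) * (∑ i, ∑ j, B i j * B j i) - 2 * (R:ℝ) * (∑ i, B i i * B i i) := by
  simp_rw [indicator_split]
  simp only [mul_add, mul_sub, Finset.sum_add_distrib, Finset.sum_sub_distrib]
  congr 1
  congr 1
  congr 1
  · -- T1
    simp [mul_ite, ite_mul, mul_zero, zero_mul, mul_one, Finset.sum_ite_eq,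
      Finset.sum_ite_eq', Finset.mul_sum, Finset.sum_mul, Finset.sum_const,
      Finset.card_univ, nsmul_eq_mul, sq]
    exact Finset.sum_congr rfl fun i _ => Finset.sum_congr rfl fun j _ => by ring
  · -- T2
    simp [mul_ite, ite_mul, mul_zero, zero_mul, mul_one, Finset.sum_ite_eq,
      Finset.sum_ite_eq', Finset.mul_sum, Finset.sum_mul, Finset.sum_const,
      Finset.card_univ, nsmul_eq_mul]
  · -- T3
    simp [mul_ite, ite_mul, mul_zero, zero_mul, mul_one, Finset.sum_ite_eq,
      Finset.sum_ite_eq', Finset.mul_sum, Finset.sum_mul, Finset.sum_const,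
      Finset.card_univ, nsmul_eq_mul]
  · -- T4
    simp [mul_ite, ite_mul, mul_zero, zero_mul, mul_one, Finset.sum_ite_eq,
      Finset.sum_ite_eq', Finset.mul_sum, Finset.sum_mul, Finset.sum_const,
      Finset.card_univ, nsmul_eq_mul]
    exact Finset.sum_congr rfl fun i _ => by ring

end BigSum

lemma cheb_abs_le (k : ℤ) (x : ℝ) (h1 : -1 ≤ x) (h2 : x ≤ 1) :
    |Polynomial.eval x (Polynomial.Chebyshev.T ℝ k)| ≤ 1 := by
  have hc : Real.cos (Real.arccos x) = x := Real.cos_arccos h1 h2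
  rw [← hc, Polynomial.Chebyshev.T_real_cos]
  exact Real.abs_cos_le_one _

theorem hutchinson_estimator_unbiased_variance
    (n R : ℕ) (hn : 1 ≤ n) (hR : 1 ≤ R)
    (M : Matrix (Fin n) (Fin n) ℝ) (hM : M.IsHermitian)
    (hspec : ∀ i, hM.eigenvalues i ∈ Set.Icc (-1 : ℝ) 1)
    (k : ℕ) :
    (∫ z, hutchinsonEstimator n R M k z ∂(rademacherProbes n R)) =
      (n : ℝ)⁻¹ * (Polynomial.aeval M (Polynomial.Chebyshev.T ℝ k)).trace ∧
    variance (hutchinsonEstimator n R M k) (rademacherProbes n R) ≤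
      2 / ((n : ℝ) * R) := by
  classical
  have hn0 : (0:ℝ) < (n:ℝ) := by exact_mod_cast Nat.lt_of_lt_of_le Nat.zero_lt_one hn
  have hR0 : (0:ℝ) < (R:ℝ) := by exact_mod_cast Nat.lt_of_lt_of_le Nat.zero_lt_one hR
  set B : Matrix (Fin n) (Fin n) ℝ := Polynomial.aeval M (Polynomial.Chebyshev.T ℝ (k : ℤ))
    with hBdef
  set c : ℝ := ((n : ℝ) * R)⁻¹ with hc
  set F := hutchinsonEstimator n R M k with hFset
  -- rewriting of the estimator
  have hFdef : ∀ z, F z = c * ∑ x : Fin R × Fin n × Fin n,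
      B x.2.1 x.2.2 * (z x.1 x.2.1 * z x.1 x.2.2) := by
    intro z
    rw [hFset]
    unfold hutchinsonEstimator
    congr 1
    rw [Fintype.sum_prod_type]
    refine Finset.sum_congr rfl fun r _ => ?_
    rw [Fintype.sum_prod_type]
    exact Finset.sum_congr rfl fun i _ => Finset.sum_congr rfl fun j _ => by ring
  -- expectation
  have htr : B.trace = ∑ i, B i i := rfl
  have hInt1 : ∫ z, F z ∂rademacherProbes n R = c * ((R:ℝ) * B.trace) := by
    rw [show F = fun z => c * ∑ x : Fin R × Fin n × Fin n,
        B x.2.1 x.2.2 * (z x.1 x.2.1 * z x.1 x.2.2) from funext hFdef]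
    rw [MeasureTheory.integral_const_mul]
    congr 1
    rw [MeasureTheory.integral_finset_sum _
      (fun x _ => (pair_integrable x.1 x.2.1 x.2.2).const_mul _)]
    have : ∀ x : Fin R × Fin n × Fin n,
        ∫ z, B x.2.1 x.2.2 * (z x.1 x.2.1 * z x.1 x.2.2) ∂rademacherProbes n R
          = B x.2.1 x.2.2 * (if x.2.1 = x.2.2 then (1:ℝ) else 0) := by
      intro x
      rw [MeasureTheory.integral_const_mul, pairIntegral]
    simp_rw [this]
    rw [Fintype.sum_prod_type]
    simp only [Fintype.sum_prod_type, mul_ite, mul_one, mul_zero, Finset.sum_ite_eq,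
      Finset.mem_univ, if_true]
    rw [Finset.sum_const, Finset.card_univ, Fintype.card_fin, nsmul_eq_mul, htr]
  have hExp : ∫ z, F z ∂rademacherProbes n R = (n : ℝ)⁻¹ * B.trace := by
    rw [hInt1, hc]
    field_simp
  refine ⟨hExp, ?_⟩
  -- measurability and boundedness
  have hmeas : Measurable F := by
    rw [hFset]; unfold hutchinsonEstimator
    fun_prop
  have hbound : ∀ᵐ z ∂rademacherProbes n R,
      ‖F z‖ ≤ |c| * ∑ x : Fin R × Fin n × Fin n, |B x.2.1 x.2.2| := by
    refine ae_pm_one.mono fun z hz => ?_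
    rw [hFdef, Real.norm_eq_abs, abs_mul]
    refine mul_le_mul_of_nonneg_left ?_ (abs_nonneg c)
    refine (Finset.abs_sum_le_sum_abs _ _).trans ?_
    refine Finset.sum_le_sum fun x _ => ?_
    rw [abs_mul, abs_mul]
    have h1 : |z x.1 x.2.1| = 1 := by rcases hz x.1 x.2.1 with h | h <;> simp [h]
    have h2 : |z x.1 x.2.2| = 1 := by rcases hz x.1 x.2.2 with h | h <;> simp [h]
    rw [h1, h2]
    simp
  have hmem : MemLp F 2 (rademacherProbes n R) :=
    MemLp.of_bound hmeas.aestronglyMeasurable _ hbound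
  -- second moment
  have hF2 : ∀ z, F z ^ 2 = c ^ 2 * ∑ x : Fin R × Fin n × Fin n,
      ∑ y : Fin R × Fin n × Fin n, (B x.2.1 x.2.2 * B y.2.1 y.2.2) *
        ((z x.1 x.2.1 * z x.1 x.2.2) * (z y.1 y.2.1 * z y.1 y.2.2)) := by
    intro z
    rw [hFdef z, mul_pow]
    congr 1
    rw [sq, Finset.sum_mul_sum]
    exact Finset.sum_congr rfl fun x _ => Finset.sum_congr rfl fun y _ => by ring
  set tr : ℝ := ∑ i, B i i with htr'
  set S2 : ℝ := ∑ i, ∑ j, B i j * B i j with hS2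
  set S3 : ℝ := ∑ i, ∑ j, B i j * B j i with hS3
  set S4 : ℝ := ∑ i, B i i * B i i with hS4
  have hInt2 : ∫ z, F z ^ 2 ∂rademacherProbes n R
      = c ^ 2 * ((R:ℝ)^2 * tr^2 + (R:ℝ) * S2 + (R:ℝ) * S3 - 2 * (R:ℝ) * S4) := by
    rw [show (fun z => F z ^ 2) = fun z => c ^ 2 * ∑ x : Fin R × Fin n × Fin n,
        ∑ y : Fin R × Fin n × Fin n, (B x.2.1 x.2.2 * B y.2.1 y.2.2) *
          ((z x.1 x.2.1 * z x.1 x.2.2) * (z y.1 y.2.1 * z y.1 y.2.2)) from funext hF2]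
    rw [MeasureTheory.integral_const_mul]
    congr 1
    rw [MeasureTheory.integral_finset_sum _ (fun x _ => integrable_finset_sum _
      (fun y _ => (quad_integrable x.1 y.1 x.2.1 x.2.2 y.2.1 y.2.2).const_mul _))]
    have hxy : ∀ x y : Fin R × Fin n × Fin n,
        ∫ z, (B x.2.1 x.2.2 * B y.2.1 y.2.2) *
          ((z x.1 x.2.1 * z x.1 x.2.2) * (z y.1 y.2.1 * z y.1 y.2.2)) ∂rademacherProbes n R
        = (B x.2.1 x.2.2 * B y.2.1 y.2.2) *
          (if (x.2.1 = x.2.2 ∧ y.2.1 = y.2.2) ∨ (x.1 = y.1 ∧ x.2.1 = y.2.1 ∧ x.2.2 = y.2.2)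
              ∨ (x.1 = y.1 ∧ x.2.1 = y.2.2 ∧ x.2.2 = y.2.1) then (1:ℝ) else 0) := by
      intro x y
      rw [MeasureTheory.integral_const_mul, quadIntegral]
    have hstep : ∀ x : Fin R × Fin n × Fin n,
        ∫ z, ∑ y : Fin R × Fin n × Fin n, (B x.2.1 x.2.2 * B y.2.1 y.2.2) *
          ((z x.1 x.2.1 * z x.1 x.2.2) * (z y.1 y.2.1 * z y.1 y.2.2)) ∂rademacherProbes n R
        = ∑ y : Fin R × Fin n × Fin n, (B x.2.1 x.2.2 * B y.2.1 y.2.2) *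
          (if (x.2.1 = x.2.2 ∧ y.2.1 = y.2.2) ∨ (x.1 = y.1 ∧ x.2.1 = y.2.1 ∧ x.2.2 = y.2.2)
              ∨ (x.1 = y.1 ∧ x.2.1 = y.2.2 ∧ x.2.2 = y.2.1) then (1:ℝ) else 0) := by
      intro x
      rw [MeasureTheory.integral_finset_sum _
        (fun y _ => (quad_integrable x.1 y.1 x.2.1 x.2.2 y.2.1 y.2.2).const_mul _)]
      exact Finset.sum_congr rfl fun y _ => hxy x y
    simp_rw [hstep]
    have := bigsum_eval (R := R) B
    rw [← this]
    simp only [Fintype.sum_prod_type]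
  -- the variance
  have hS23 : S3 = S2 := by
    rw [hS3, hS2]
    refine Finset.sum_congr rfl fun i _ => Finset.sum_congr rfl fun j _ => ?_
    have hsymB : Bᵀ = B := aeval_transpose_eq M hM _
    have : B j i = B i j := by
      calc B j i = Bᵀ i j := rfl
      _ = B i j := by rw [hsymB]
    rw [this]
  have hS2le : S2 ≤ (n : ℝ) := by
    rw [hS2]
    have h1 : ∑ i, ∑ j, B i j * B i j = ∑ i, ∑ j, (B i j)^2 := by
      exact Finset.sum_congr rfl fun i _ => Finset.sum_congr rfl fun j _ => (sq (B i j)).symm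
    rw [h1, hBdef, sum_sq_aeval M hM]
    calc ∑ i, (Polynomial.eval (hM.eigenvalues i) (Polynomial.Chebyshev.T ℝ (k:ℤ)))^2
        ≤ ∑ _i : Fin n, (1:ℝ) := by
          refine Finset.sum_le_sum fun i _ => ?_
          have hb := cheb_abs_le (k:ℤ) (hM.eigenvalues i) (hspec i).1 (hspec i).2
          calc (Polynomial.eval (hM.eigenvalues i) (Polynomial.Chebyshev.T ℝ (k:ℤ)))^2
              = |Polynomial.eval (hM.eigenvalues i) (Polynomial.Chebyshev.T ℝ (k:ℤ))|^2 :=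
                (sq_abs _).symm
          _ ≤ 1^2 := by gcongr
          _ = 1 := one_pow 2
      _ = (n : ℝ) := by rw [Finset.sum_const, Finset.card_univ, Fintype.card_fin,
            nsmul_eq_mul, mul_one]
  have hS4nn : 0 ≤ S4 := Finset.sum_nonneg fun i _ => mul_self_nonneg _
  have hvar : variance F (rademacherProbes n R)
      = c^2 * (2 * (R:ℝ) * S2 - 2 * (R:ℝ) * S4) := by
    rw [variance_eq_sub hmem]
    have hp2 : (F ^ 2 : (Fin R → Fin n → ℝ) → ℝ) = fun z => F z ^ 2 := rfl
    rw [hp2, hInt2, hInt1, hS23, htr]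
    ring
  rw [hvar]
  have hfinal : c^2 * (2 * (R:ℝ) * (n:ℝ)) = 2 / ((n : ℝ) * R) := by
    rw [hc]
    field_simp
  calc c^2 * (2 * (R:ℝ) * S2 - 2 * (R:ℝ) * S4)
      ≤ c^2 * (2 * (R:ℝ) * (n:ℝ)) := by
        refine mul_le_mul_of_nonneg_left ?_ (sq_nonneg c)
        have h1 : 2 * (R:ℝ) * S2 - 2 * (R:ℝ) * S4 ≤ 2 * (R:ℝ) * S2 := by
          nlinarith
        refine h1.trans ?_
        have : (0:ℝ) ≤ 2 * (R:ℝ) := by positivity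
        nlinarith
    _ = 2 / ((n : ℝ) * R) := hfinal
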